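/- arXiv:1111.4626 — 2 statements merged into one kernel-verified Lean document; each statement's English description precedes it below -/
import Mathlib

section
/- For β > 0, α > 0, and s > 0, the integral ∫₀¹ log₂(1 + (β/α)·s²τ/(1+sτ)) dτ equals [1 + (s + (β/α)s²)^{-1}]·log₂(1 + s + (β/α)s²) − (1 + 1/s)·log₂(1+s). -/
/-- Key lemma: `∫₀¹ log₂(1+bτ) dτ = (1+b⁻¹)·log₂(1+b) − 1/ln 2` for `b > 0`. -/
lemma aux_integral_logb (b : ℝ) (hb : 0 < b) :
    ∫ τ in (0 : ℝ)..1, Real.logb 2 (1 + b * τ) =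
      (1 + b⁻¹) * Real.logb 2 (1 + b) - (Real.log 2)⁻¹ := by
  have hlog2 : Real.log 2 ≠ 0 := ne_of_gt (Real.log_pos (by norm_num))
  have hpos : ∀ τ ∈ Set.uIcc (0:ℝ) 1, (0:ℝ) < 1 + b * τ := by
    intro τ hτ
    rw [Set.uIcc_of_le (by norm_num : (0:ℝ) ≤ 1)] at hτ
    nlinarith [hτ.1, hτ.2]
  have hderiv : ∀ τ ∈ Set.uIcc (0:ℝ) 1,
      HasDerivAt (fun τ => ((1 + b * τ) * Real.log (1 + b * τ) - b * τ) / (b * Real.log 2))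
        (Real.logb 2 (1 + b * τ)) τ := by
    intro τ hτ
    have hne : 1 + b * τ ≠ 0 := ne_of_gt (hpos τ hτ)
    have h1 : HasDerivAt (fun τ : ℝ => 1 + b * τ) b τ := by
      simpa using ((hasDerivAt_id τ).const_mul b).const_add 1
    have h2 : HasDerivAt (fun τ : ℝ => Real.log (1 + b * τ)) (b / (1 + b * τ)) τ := h1.log hne
    have h3 := (h1.mul h2).sub ((hasDerivAt_id τ).const_mul b)
    have h4 := h3.div_const (b * Real.log 2)
    convert h4 using 1
    all_goals try rfl
    simp only [Real.logb]
    field_simp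
    ring
  have hint : IntervalIntegrable (fun τ => Real.logb 2 (1 + b * τ))
      MeasureTheory.volume 0 1 := by
    apply ContinuousOn.intervalIntegrable
    apply ContinuousOn.div _ continuousOn_const (fun x _ => hlog2)
    exact ContinuousOn.log ((continuousOn_const.add (continuousOn_const.mul continuousOn_id)))
      (fun τ hτ => ne_of_gt (hpos τ hτ))
  rw [intervalIntegral.integral_eq_sub_of_hasDerivAt hderiv hint]
  have hb' : b ≠ 0 := ne_of_gt hb
  simp only [Real.logb]
  field_simp
  simp only [mul_zero, add_zero, Real.log_one]
  ring

/-- Closed-form evaluation of the low-SNR rate integral: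
`∫₀¹ log₂(1 + (β/α)s²τ/(1+sτ)) dτ
  = [1 + (s + (β/α)s²)⁻¹]·log₂(1 + s + (β/α)s²) − (1 + 1/s)·log₂(1+s)`. -/
theorem stmt7 (β α s : ℝ) (hβ : 0 < β) (hα : 0 < α) (hs : 0 < s) :
    ∫ τ in (0 : ℝ)..1, Real.logb 2 (1 + (β / α) * s ^ 2 * τ / (1 + s * τ)) =
      (1 + (s + (β / α) * s ^ 2)⁻¹) * Real.logb 2 (1 + s + (β / α) * s ^ 2) -
        (1 + 1 / s) * Real.logb 2 (1 + s) := by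
  have hc : 0 < β / α := div_pos hβ hα
  set c := β / α with hcdef
  set a := s + c * s ^ 2 with hadef
  have ha : 0 < a := by positivity
  have hcongr : ∫ τ in (0 : ℝ)..1, Real.logb 2 (1 + c * s ^ 2 * τ / (1 + s * τ)) =
      ∫ τ in (0 : ℝ)..1, (Real.logb 2 (1 + a * τ) - Real.logb 2 (1 + s * τ)) := by
    apply intervalIntegral.integral_congr
    intro τ hτ
    rw [Set.uIcc_of_le (by norm_num : (0:ℝ) ≤ 1)] at hτ
    have hs1 : (0:ℝ) < 1 + s * τ := by nlinarith [hτ.1, hτ.2]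
    have ha1 : (0:ℝ) < 1 + a * τ := by nlinarith [hτ.1, hτ.2]
    have : 1 + c * s ^ 2 * τ / (1 + s * τ) = (1 + a * τ) / (1 + s * τ) := by
      field_simp
      ring
    show Real.logb 2 (1 + c * s ^ 2 * τ / (1 + s * τ)) = _
    rw [this, Real.logb_div (ne_of_gt ha1) (ne_of_gt hs1)]
  have hintgen : ∀ b : ℝ, 0 < b → IntervalIntegrable (fun τ => Real.logb 2 (1 + b * τ))
      MeasureTheory.volume 0 1 := by
    intro b hb
    apply ContinuousOn.intervalIntegrable
    apply ContinuousOn.div _ continuousOn_const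
    · exact fun x _ => ne_of_gt (Real.log_pos (by norm_num))
    · apply ContinuousOn.log ((continuousOn_const.add (continuousOn_const.mul continuousOn_id)))
      intro τ hτ
      rw [Set.uIcc_of_le (by norm_num : (0:ℝ) ≤ 1)] at hτ
      simp only [Pi.add_apply, Pi.mul_apply, id_eq]
      nlinarith [hτ.1, hτ.2]
  rw [hcongr, intervalIntegral.integral_sub (hintgen a ha) (hintgen s hs),
    aux_integral_logb a ha, aux_integral_logb s hs]
  rw [one_div]
  rw [hadef]
  ring
end

section
/- Define R(s) = [1 + (s + c·s²)^{-1}]·log₂(1 + s + c·s²) − (1 + 1/s)·log₂(1+s) for s > 0 and constant c = β/α > 0. Then R(s) = c·s²/(2·ln 2) + O(s³) as s → 0⁺. -/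
lemma log1p_bound {x : ℝ} (h0 : 0 ≤ x) (h1 : x ≤ 1/2) :
    |Real.log (1+x) - x + x^2/2| ≤ 2*x^3 := by
  have h := Real.abs_log_sub_add_sum_range_le (x := -x)
    (by rw [abs_neg, abs_of_nonneg h0]; linarith) 2
  simp only [Finset.sum_range_succ, Finset.sum_range_zero] at h
  rw [abs_neg, abs_of_nonneg h0] at h
  have e1 : (0 + (-x)^(0+1)/((0:ℕ)+1) + (-x)^(1+1)/((1:ℕ)+1)) + Real.log (1 - -x)
      = Real.log (1+x) - x + x^2/2 := by
    rw [show (1 : ℝ) - -x = 1 + x by ring]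
    push_cast
    ring
  rw [e1] at h
  refine h.trans ?_
  rw [div_le_iff₀ (by linarith)]
  norm_num
  nlinarith [pow_nonneg h0 3, mul_nonneg (pow_nonneg h0 3) (by linarith : (0:ℝ) ≤ 1 - 2*x)]

lemma hasDerivAt_phi (x : ℝ) (hx : (0:ℝ) ≤ x) :
    HasDerivAt (fun y : ℝ => (y+1)*Real.log (1+y) - y - y^2/2 + y^3/6)
      (Real.log (1+x) - x + x^2/2) x := by
  have h1 : HasDerivAt (fun y : ℝ => 1 + y) 1 x := by
    simpa using (hasDerivAt_id x).const_add 1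
  have hlog : HasDerivAt (fun y : ℝ => Real.log (1+y)) ((1+x)⁻¹) x := by
    have := (Real.hasDerivAt_log (by linarith : (1:ℝ)+x ≠ 0)).comp x h1
    simpa [Function.comp_def] using this
  have hmul : HasDerivAt (fun y : ℝ => (y+1)*Real.log (1+y))
      (1*Real.log (1+x) + (x+1)*(1+x)⁻¹) x :=
    ((hasDerivAt_id x).add_const 1).mul hlog
  have h2 : HasDerivAt (fun y : ℝ => y^2/2) x x := by
    simpa using (hasDerivAt_pow 2 x).div_const 2
  have h3 : HasDerivAt (fun y : ℝ => y^3/6) (x^2/2) x := by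
    have := (hasDerivAt_pow 3 x).div_const 6
    convert this using 1
    all_goals first | rfl | (push_cast; ring)
  have := ((hmul.sub (hasDerivAt_id x)).sub h2).add h3
  convert this using 1
  have hne : (1:ℝ)+x ≠ 0 := by linarith
  all_goals try rfl
  field_simp
  ring

lemma phi_bound {x : ℝ} (h0 : 0 ≤ x) (h1 : x ≤ 1/2) :
    |(x+1)*Real.log (1+x) - x - x^2/2 + x^3/6| ≤ x^4/2 := by
  set F : ℝ → ℝ := fun y => (y+1)*Real.log (1+y) - y - y^2/2 + y^3/6 with hF
  have hG : ∀ (σ : ℝ), σ = 1 ∨ σ = -1 →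
      MonotoneOn (fun y => y^4/2 + σ * F y) (Set.Icc 0 (1/2)) := by
    intro σ hσ
    have hderiv : ∀ y ∈ Set.Icc (0:ℝ) (1/2),
        HasDerivAt (fun y => y^4/2 + σ * F y)
          (2*y^3 + σ * (Real.log (1+y) - y + y^2/2)) y := by
      intro y hy
      have h4 : HasDerivAt (fun y : ℝ => y^4/2) (2*y^3) y := by
        have := (hasDerivAt_pow 4 y).div_const 2
        convert this using 1
        all_goals first | rfl | (push_cast; ring)
      exact h4.add ((hasDerivAt_phi y hy.1).const_mul σ)
    apply monotoneOn_of_deriv_nonneg (convex_Icc _ _)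
    · intro y hy
      exact (hderiv y hy).differentiableAt.continuousAt.continuousWithinAt
    · intro y hy
      rw [interior_Icc] at hy
      exact ((hderiv y ⟨le_of_lt hy.1, le_of_lt hy.2⟩).differentiableAt).differentiableWithinAt
    · intro y hy
      rw [interior_Icc] at hy
      rw [(hderiv y ⟨le_of_lt hy.1, le_of_lt hy.2⟩).deriv]
      have hb := log1p_bound (le_of_lt hy.1) (le_of_lt hy.2)
      have : |σ * (Real.log (1+y) - y + y^2/2)| ≤ 2*y^3 := by
        rw [abs_mul]
        rcases hσ with h | h <;> rw [h] <;> simpa using hb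
      nlinarith [abs_le.1 this]
  have h0mem : (0:ℝ) ∈ Set.Icc (0:ℝ) (1/2) := by norm_num
  have hxmem : x ∈ Set.Icc (0:ℝ) (1/2) := ⟨h0, h1⟩
  have e0 : F 0 = 0 := by simp [hF]
  have g1 := hG 1 (Or.inl rfl) h0mem hxmem h0
  have g2 := hG (-1) (Or.inr rfl) h0mem hxmem h0
  simp only [e0] at g1 g2
  rw [abs_le]
  constructor <;> [skip; skip] <;> simp only [hF] at g1 g2 ⊢ <;> nlinarith [g1, g2]


/-- With `R(s) = [1 + (s + cs²)⁻¹]·log₂(1 + s + cs²) − (1 + 1/s)·log₂(1+s)` and `c > 0`,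
one has `R(s) = c·s²/(2 ln 2) + O(s³)` as `s → 0⁺`. -/
theorem stmt8 (c : ℝ) (hc : 0 < c) (R : ℝ → ℝ)
    (hR : ∀ s : ℝ, 0 < s →
      R s = (1 + (s + c * s ^ 2)⁻¹) * Real.logb 2 (1 + s + c * s ^ 2) -
        (1 + 1 / s) * Real.logb 2 (1 + s)) :
    ∃ δ > (0 : ℝ), ∃ K > (0 : ℝ), ∀ s : ℝ, 0 < s → s < δ →
      |R s - c * s ^ 2 / (2 * Real.log 2)| ≤ K * s ^ 3 := by
  have hlog2 : (0:ℝ) < Real.log 2 := Real.log_pos (by norm_num)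
  refine ⟨min (1/4) (1/c), by positivity, (5+c)/Real.log 2, by positivity, ?_⟩
  intro s hs hsδ
  have hs4 : s < 1/4 := lt_of_lt_of_le hsδ (min_le_left _ _)
  have hsc : c*s < 1 := by
    have h := lt_of_lt_of_le hsδ (min_le_right _ _)
    rw [lt_div_iff₀ hc] at h
    linarith [h]
  have hcs : c*s^2 ≤ s := by nlinarith
  have hb : 0 < s + c*s^2 := by positivity
  have hb2 : s + c*s^2 ≤ 2*s := by nlinarith
  have hb12 : s + c*s^2 ≤ 1/2 := by nlinarith
  have hΦb := phi_bound hb.le hb12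
  have hΦa := phi_bound hs.le (by linarith : s ≤ 1/2)
  have key : R s - c*s^2/(2*Real.log 2) =
      ((((s+c*s^2)+1)*Real.log (1+(s+c*s^2)) - (s+c*s^2) - (s+c*s^2)^2/2 + (s+c*s^2)^3/6)/(s+c*s^2)
       - ((s+1)*Real.log (1+s) - s - s^2/2 + s^3/6)/s
       - c*s^2*(2*s+c*s^2)/6) / Real.log 2 := by
    rw [hR s hs, Real.logb, Real.logb,
      show (1:ℝ) + s + c*s^2 = 1 + (s+c*s^2) by ring]
    field_simp
    ring
  set A := (((s+c*s^2)+1)*Real.log (1+(s+c*s^2)) - (s+c*s^2) - (s+c*s^2)^2/2 + (s+c*s^2)^3/6)/(s+c*s^2) with hA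
  set B := ((s+1)*Real.log (1+s) - s - s^2/2 + s^3/6)/s with hB
  have hAb : |A| ≤ 4*s^3 := by
    rw [hA, abs_div, abs_of_pos hb, div_le_iff₀ hb]
    refine hΦb.trans ?_
    have h3 : (s+c*s^2)^3 ≤ (2*s)^3 := pow_le_pow_left₀ hb.le hb2 3
    nlinarith [hb.le]
  have hBb : |B| ≤ s^3/2 := by
    rw [hB, abs_div, abs_of_pos hs, div_le_iff₀ hs]
    refine hΦa.trans ?_
    nlinarith [hs.le]
  have hCb : |c*s^2*(2*s+c*s^2)/6| ≤ c*s^3/2 := by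
    rw [abs_of_nonneg (by positivity)]
    nlinarith [mul_nonneg (mul_nonneg hc.le (sq_nonneg s)) (by linarith : (0:ℝ) ≤ s - c*s^2)]
  have hX : |A - B - c*s^2*(2*s+c*s^2)/6| ≤ (5+c)*s^3 := by
    rw [show (5+c)*s^3 = 5*s^3 + c*s^3 by ring, abs_le]
    have a1 := abs_le.1 hAb
    have a2 := abs_le.1 hBb
    have a3 := abs_le.1 hCb
    have hcs3 : (0:ℝ) ≤ c*s^3 := by positivity
    constructor <;> linarith
  calc |R s - c * s ^ 2 / (2 * Real.log 2)|
      = |A - B - c*s^2*(2*s+c*s^2)/6| / Real.log 2 := by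
        rw [key, abs_div, abs_of_pos hlog2]
    _ ≤ ((5+c)*s^3) / Real.log 2 := by
        gcongr
    _ = (5+c)/Real.log 2 * s^3 := by ring
end
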